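/- Let 𝒜 be the compact subintervals of [a,b], ν the length function, and μ : 𝒜 → ℝ interval-additive. If the strict derivative of μ with respect to ν exists and equals 0 at every point of [a,b], then μ(I) = 0 for every I ∈ 𝒜. -/

import Mathlib

/-- `μ c d` is the value of the set function on the interval `[c,d]`;
interval-additivity: `μ [c,e] = μ [c,d] + μ [d,e]` for `c ≤ d ≤ e` in `[a,b]`. -/
def IntervalAdditive (a b : ℝ) (μ : ℝ → ℝ → ℝ) : Prop :=
  ∀ c d e : ℝ, a ≤ c → c ≤ d → d ≤ e → e ≤ b → μ c e = μ c d + μ d e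

/-- `g` is the Peano strict derivative of the interval function `μ` with respect
to length on `[a,b]`: for every `x ∈ [a,b]` and `ε > 0` there is `δ > 0` with
`|μ [c,d] / (d - c) - g x| < ε` for every nondegenerate interval
`[c,d] ⊆ (x - δ, x + δ) ∩ [a,b]`. -/
def PeanoStrictDeriv (a b : ℝ) (μ : ℝ → ℝ → ℝ) (g : ℝ → ℝ) : Prop :=
  ∀ x ∈ Set.Icc a b, ∀ ε > 0, ∃ δ > 0, ∀ c d : ℝ, a ≤ c → c < d → d ≤ b →
    Set.Icc c d ⊆ Set.Ioo (x - δ) (x + δ) → |μ c d / (d - c) - g x| < ε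

/-- Cauchy's Theorem 4 as rigorized by Peano: if the strict derivative of an
interval-additive set function `μ` with respect to length vanishes identically
on `[a,b]`, then `μ` vanishes on every compact subinterval. -/
theorem peano_vanishing_strict_derivative (a b : ℝ) (μ : ℝ → ℝ → ℝ)
    (hμ : IntervalAdditive a b μ)
    (h : PeanoStrictDeriv a b μ (fun _ => 0)) :
    ∀ c d : ℝ, a ≤ c → c ≤ d → d ≤ b → μ c d = 0 := by
  have hdeg : ∀ c : ℝ, a ≤ c → c ≤ b → μ c c = 0 := by
    intro c hac hcb
    have := hμ c c c hac le_rfl le_rfl hcb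
    linarith
  intro c d hac hcd hdb
  rcases eq_or_lt_of_le hcd with rfl | hlt
  · exact hdeg c hac hdb
  -- key estimate: for every ε > 0, |μ c d| ≤ ε * (d - c)
  have key : ∀ ε : ℝ, 0 < ε → |μ c d| ≤ ε * (d - c) := by
    intro ε hε
    set S : Set ℝ := {t | t ∈ Set.Icc c d ∧ |μ c t| ≤ ε * (t - c)} with hS
    have hcS : c ∈ S := by
      refine ⟨⟨le_rfl, hcd⟩, ?_⟩
      rw [hdeg c hac (hcd.trans hdb)]
      simp
    have hbdd : BddAbove S := ⟨d, fun t ht => ht.1.2⟩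
    have hne : S.Nonempty := ⟨c, hcS⟩
    set T := sSup S with hT
    have hTc : c ≤ T := le_csSup hbdd hcS
    have hTd : T ≤ d := csSup_le hne fun t ht => ht.1.2
    have hTab : T ∈ Set.Icc a b := ⟨hac.trans hTc, hTd.trans hdb⟩
    obtain ⟨δ, hδ, hder⟩ := h T hTab ε hε
    obtain ⟨t, htS, htlt⟩ := exists_lt_of_lt_csSup hne (by linarith : T - δ < T)
    have htT : t ≤ T := le_csSup hbdd htS
    -- any u with t ≤ u ≤ d and u < T + δ lies in S
    have step : ∀ u : ℝ, t ≤ u → u ≤ d → u < T + δ → u ∈ S := by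
      intro u htu hud huδ
      rcases eq_or_lt_of_le htu with rfl | htu'
      · exact htS
      · have hsub : Set.Icc t u ⊆ Set.Ioo (T - δ) (T + δ) := fun x hx =>
          ⟨lt_of_lt_of_le htlt hx.1, lt_of_le_of_lt hx.2 huδ⟩
        have hat : a ≤ t := hac.trans htS.1.1
        have hub : u ≤ b := hud.trans hdb
        have hest := hder t u hat htu' hub hsub
        simp only [sub_zero] at hest
        have hut : (0:ℝ) < u - t := by linarith
        have h1 : |μ t u| ≤ ε * (u - t) := by
          rw [abs_div, abs_of_pos hut] at hest
          calc |μ t u| = |μ t u| / (u - t) * (u - t) := by field_simp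
            _ ≤ ε * (u - t) := by nlinarith [abs_nonneg (μ t u)]
        have hadd : μ c u = μ c t + μ t u :=
          hμ c t u hac htS.1.1 htu hub
        refine ⟨⟨htS.1.1.trans htu, hud⟩, ?_⟩
        calc |μ c u| ≤ |μ c t| + |μ t u| := by rw [hadd]; exact abs_add_le _ _
          _ ≤ ε * (t - c) + ε * (u - t) := add_le_add htS.2 h1
          _ = ε * (u - c) := by ring
    -- T must equal d
    have hTeq : T = d := by
      by_contra hne'
      have hTd' : T < d := lt_of_le_of_ne hTd hne'
      set u := min d (T + δ/2) with hu
      have hu1 : u ≤ d := min_le_left _ _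
      have hu2 : u < T + δ := lt_of_le_of_lt (min_le_right _ _) (by linarith)
      have hu3 : t ≤ u := htT.trans (le_min hTd'.le (by linarith))
      have hu4 : T < u := lt_min hTd' (by linarith)
      have := le_csSup hbdd (step u hu3 hu1 hu2)
      linarith
    have hdS : d ∈ S := step d (htT.trans hTd) le_rfl (by rw [hTeq]; linarith)
    exact hdS.2
  -- conclude
  by_contra hne
  have habs : 0 < |μ c d| := abs_pos.mpr hne
  have hdc : (0:ℝ) < d - c := by linarith
  have := key (|μ c d| / (2 * (d - c))) (by positivity)
  have h2 : |μ c d| / (2 * (d - c)) * (d - c) = |μ c d| / 2 := by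
    field_simp
  rw [h2] at this
  linarith
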